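/- Let n ≥ 3 and let p, q ∈ ℝⁿ. For the Sutcliffe matrices built from p, q and the Lax matrix A(ζ) = (T₁+iT₂) − 2iT₃ζ + (T₁−iT₂)ζ², one has, for every ζ ∈ ℂ, (1/2)·Tr(A(ζ)²) = ζ²·H, where H = (1/2)(p₁² + … + pₙ²) − (exp(q₁−q₂) + exp(q₂−q₃) + … + exp(qₙ−q₁)) is the affine Toda Hamiltonian. -/

import Mathlib

open Matrix Complex

/-- The Sutcliffe matrix `T₁+iT₂`. -/
noncomputable def sutTplus (n : ℕ) [NeZero n] (q : Fin n → ℝ) :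
    Matrix (Fin n) (Fin n) ℂ :=
  Matrix.of fun i j => if j = i + 1 then (Real.exp ((q i - q (i + 1)) / 2) : ℂ) else 0

/-- The Sutcliffe matrix `T₁−iT₂ = −(T₁+iT₂)ᵀ`. -/
noncomputable def sutTminus (n : ℕ) [NeZero n] (q : Fin n → ℝ) :
    Matrix (Fin n) (Fin n) ℂ :=
  -(sutTplus n q)ᵀ

/-- The Sutcliffe matrix `T₃ = −(i/2)·diag(p₁,…,pₙ)`. -/
noncomputable def sutT3 (n : ℕ) [NeZero n] (p : Fin n → ℝ) :
    Matrix (Fin n) (Fin n) ℂ :=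
  (-(Complex.I / 2)) • Matrix.diagonal fun i => (p i : ℂ)

lemma fne1 (n : ℕ) [NeZero n] (hn : 3 ≤ n) (i : Fin n) : i + 1 ≠ i := by
  intro h
  have h1 : (1 : Fin n) = 0 := by
    have := add_right_cancel (a := (1:Fin n)) (b := i) (c := 0) (by simpa [add_comm] using h)
    simpa using this
  rw [Fin.ext_iff, Fin.val_one', Fin.val_zero] at h1
  rw [Nat.mod_eq_of_lt (by omega)] at h1
  omega

lemma fne2 (n : ℕ) [NeZero n] (hn : 3 ≤ n) (i : Fin n) : i ≠ i + 1 + 1 := by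
  intro h
  have h1 : ((1:Fin n) + 1) = 0 := left_eq_add.mp (by rw [add_assoc] at h; exact h)
  have h2 := congrArg Fin.val h1
  rw [Fin.val_add, Fin.val_one', Fin.val_zero] at h2
  rw [Nat.mod_eq_of_lt (show 1 < n by omega)] at h2
  rw [Nat.mod_eq_of_lt (show 1+1 < n by omega)] at h2
  omega

lemma hPdiag (n : ℕ) [NeZero n] (hn : 3 ≤ n) (q : Fin n → ℝ) (i : Fin n) :
    sutTplus n q i i = 0 := by
  simp [sutTplus, Ne.symm (fne1 n hn i)]

lemma hPP (n : ℕ) [NeZero n] (hn : 3 ≤ n) (q : Fin n → ℝ) :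
    trace (sutTplus n q * sutTplus n q) = 0 := by
  simp only [trace, diag, mul_apply, sutTplus, of_apply]
  refine Finset.sum_eq_zero fun i _ => Finset.sum_eq_zero fun x _ => ?_
  rcases eq_or_ne x (i + 1) with h | h
  · subst h
    rw [if_neg (fne2 n hn i), mul_zero]
  · rw [if_neg h, zero_mul]

lemma hMM (n : ℕ) [NeZero n] (hn : 3 ≤ n) (q : Fin n → ℝ) :
    trace (sutTminus n q * sutTminus n q) = 0 := by
  rw [sutTminus, Matrix.neg_mul, Matrix.mul_neg, neg_neg, ← Matrix.transpose_mul,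
    Matrix.trace_transpose, hPP n hn q]

lemma hPD (n : ℕ) [NeZero n] (hn : 3 ≤ n) (q : Fin n → ℝ) (d : Fin n → ℂ) :
    trace (sutTplus n q * Matrix.diagonal d) = 0 := by
  simp only [trace, diag, Matrix.mul_diagonal]
  exact Finset.sum_eq_zero fun i _ => by rw [hPdiag n hn q i, zero_mul]

lemma hPS (n : ℕ) [NeZero n] (hn : 3 ≤ n) (p q : Fin n → ℝ) :
    trace (sutTplus n q * sutT3 n p) = 0 := by
  rw [sutT3, Matrix.mul_smul, trace_smul, hPD n hn q, smul_zero]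

lemma hMS (n : ℕ) [NeZero n] (hn : 3 ≤ n) (p q : Fin n → ℝ) :
    trace (sutTminus n q * sutT3 n p) = 0 := by
  rw [sutTminus, sutT3, Matrix.mul_smul, trace_smul, Matrix.neg_mul, trace_neg,
    ← Matrix.diagonal_transpose, ← Matrix.transpose_mul, Matrix.trace_transpose,
    Matrix.trace_mul_comm, hPD n hn q, neg_zero, smul_zero]

lemma hSS (n : ℕ) [NeZero n] (p : Fin n → ℝ) :
    trace (sutT3 n p * sutT3 n p) = (-(1:ℂ)/4) * ∑ i, (p i : ℂ)^2 := by
  simp only [sutT3, Matrix.smul_mul, Matrix.mul_smul, trace_smul, smul_smul,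
    Matrix.diagonal_mul_diagonal, trace_diagonal, smul_eq_mul]
  rw [Finset.mul_sum, Finset.mul_sum]
  refine Finset.sum_congr rfl fun i _ => ?_
  linear_combination ((p i : ℂ)^2/4) * Complex.I_sq

lemma hPM (n : ℕ) [NeZero n] (q : Fin n → ℝ) :
    trace (sutTplus n q * sutTminus n q)
      = -∑ i, (Real.exp (q i - q (i + 1)) : ℂ) := by
  simp only [sutTminus, Matrix.mul_neg, trace_neg, neg_inj]
  simp only [trace, diag, mul_apply, sutTplus, transpose_apply, of_apply]
  simp only [ite_mul, mul_ite, zero_mul, mul_zero]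
  simp only [Finset.sum_ite_eq' (Finset.univ), Finset.mem_univ, if_true]
  refine Finset.sum_congr rfl fun i _ => ?_
  rw [← Complex.ofReal_mul, ← Real.exp_add]
  norm_num

lemma hSP (n : ℕ) [NeZero n] (hn : 3 ≤ n) (p q : Fin n → ℝ) :
    trace (sutT3 n p * sutTplus n q) = 0 := by
  rw [Matrix.trace_mul_comm]; exact hPS n hn p q

lemma hSM (n : ℕ) [NeZero n] (hn : 3 ≤ n) (p q : Fin n → ℝ) :
    trace (sutT3 n p * sutTminus n q) = 0 := by
  rw [Matrix.trace_mul_comm]; exact hMS n hn p q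

lemma hMP (n : ℕ) [NeZero n] (q : Fin n → ℝ) :
    trace (sutTminus n q * sutTplus n q)
      = -∑ i, (Real.exp (q i - q (i + 1)) : ℂ) := by
  rw [Matrix.trace_mul_comm]; exact hPM n q


/-- For `n ≥ 3` and the Lax matrix `A(ζ) = (T₁+iT₂) − 2iT₃ζ + (T₁−iT₂)ζ²` built from the
Sutcliffe matrices, `(1/2)·Tr(A(ζ)²) = ζ²·H`, where `H` is the affine Toda Hamiltonian
`H = (1/2)Σᵢ pᵢ² − Σᵢ exp(qᵢ − q_{i+1})`. -/
theorem stmt7 (n : ℕ) [NeZero n] (hn : 3 ≤ n) (p q : Fin n → ℝ) :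
    ∀ ζ : ℂ,
      (1 / 2 : ℂ) * Matrix.trace
          ((sutTplus n q - (2 * Complex.I * ζ) • sutT3 n p + ζ ^ 2 • sutTminus n q) ^ 2)
        = ζ ^ 2 *
          (((1 / 2) * ∑ i, p i ^ 2 - ∑ i, Real.exp (q i - q (i + 1)) : ℝ) : ℂ) := by
  intro ζ
  simp only [sq, Matrix.add_mul, Matrix.mul_add, Matrix.sub_mul, Matrix.mul_sub,
    Matrix.smul_mul, Matrix.mul_smul, smul_smul, trace_add, trace_sub, trace_smul,
    hPP n hn q, hMM n hn q, hPS n hn p q, hSP n hn p q, hMS n hn p q, hSM n hn p q,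
    hSS n p, hPM n q, hMP n q, smul_eq_mul, mul_zero, smul_zero]
  push_cast
  have hsum : ∑ x : Fin n, ((p x : ℂ)) * (p x) = ∑ x : Fin n, ((p x : ℂ))^2 :=
    Finset.sum_congr rfl fun i _ => (sq (p i : ℂ)).symm
  rw [hsum]
  linear_combination (-(ζ^2 * ∑ i, ((p i : ℂ))^2)/2) * Complex.I_sq
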